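/- Pointwise ρ-IQC for repeated monotone nonlinearities with diagonally dominant multiplier (Proposition 21). Let n ∈ ℕ, let φ : ℝ → ℝ be monotone nondecreasing with φ(0) = 0, and let Γ ∈ ℝ^{n×n} be symmetric with Γ_{ii} ≥ 0 for all i, Γ_{ij} ≤ 0 for all i ≠ j, and Γ_{ii} ≥ ∑_{j≠i} |Γ_{ij}| for all i (diagonal dominance). Then for every y ∈ ℝⁿ, setting u ∈ ℝⁿ with u_i = φ(y_i) for each i, we have uᵀ Γ y ≥ 0. -/

import Mathlib

open Matrix

/-- Proposition 21: the repeated monotone nonlinearity satisfies the pointwise IQC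
defined by a symmetric diagonally dominant multiplier `Γ`. -/
theorem stmt_15 {n : ℕ} (φ : ℝ → ℝ) (hφ : Monotone φ) (hφ0 : φ 0 = 0)
    (Γ : Matrix (Fin n) (Fin n) ℝ) (hΓsymm : Γ.IsSymm)
    (hdiag : ∀ i, 0 ≤ Γ i i)
    (hoff : ∀ i j, i ≠ j → Γ i j ≤ 0)
    (hdd : ∀ i, ∑ j ∈ Finset.univ.erase i, |Γ i j| ≤ Γ i i) :
    ∀ y : Fin n → ℝ, 0 ≤ (fun i => φ (y i)) ⬝ᵥ (Γ *ᵥ y) := by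
  intro y
  have hsym : ∀ i j, Γ j i = Γ i j := fun i j => hΓsymm.apply i j
  have hφy : ∀ i, 0 ≤ φ (y i) * y i := by
    intro i
    rcases le_total 0 (y i) with h | h
    · exact mul_nonneg (hφ0 ▸ hφ h) h
    · have h1 : φ (y i) ≤ 0 := hφ0 ▸ hφ h
      nlinarith
  have hcross : ∀ i j, 0 ≤ (φ (y i) - φ (y j)) * (y i - y j) := by
    intro i j
    rcases le_total (y i) (y j) with h | h
    · have h1 : φ (y i) - φ (y j) ≤ 0 := sub_nonpos.2 (hφ h)
      have h2 : y i - y j ≤ 0 := sub_nonpos.2 h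
      nlinarith
    · exact mul_nonneg (sub_nonneg.2 (hφ h)) (sub_nonneg.2 h)
  have hrow : ∀ i, 0 ≤ ∑ j, Γ i j := by
    intro i
    have h1 : ∑ j ∈ Finset.univ.erase i, |Γ i j| = -∑ j ∈ Finset.univ.erase i, Γ i j := by
      rw [← Finset.sum_neg_distrib]
      refine Finset.sum_congr rfl fun j hj => abs_of_nonpos (hoff i j (Finset.ne_of_mem_erase hj).symm)
    have h2 : Γ i i + ∑ j ∈ Finset.univ.erase i, Γ i j = ∑ j, Γ i j :=
      Finset.add_sum_erase _ _ (Finset.mem_univ i)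
    have := hdd i
    rw [h1] at this
    linarith
  set S := ∑ i, ∑ j, φ (y i) * (Γ i j * y j) with hS
  have hgoal : (fun i => φ (y i)) ⬝ᵥ (Γ *ᵥ y) = S := by
    simp [dotProduct, mulVec, Finset.mul_sum]
    exact hS.symm
  rw [hgoal]
  have swap1 : S = ∑ i, ∑ j, φ (y j) * (Γ i j * y i) := by
    rw [hS, Finset.sum_comm]
    exact Finset.sum_congr rfl fun j _ => Finset.sum_congr rfl fun i _ => by rw [hsym j i]
  have key : 2 * S = (∑ i, ∑ j, (-Γ i j) * ((φ (y i) - φ (y j)) * (y i - y j)))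
      + ∑ i, ∑ j, Γ i j * (φ (y i) * y i + φ (y j) * y j) := by
    rw [two_mul]
    nth_rewrite 2 [swap1]
    rw [hS]
    calc (∑ i, ∑ j, φ (y i) * (Γ i j * y j)) + ∑ i, ∑ j, φ (y j) * (Γ i j * y i)
        = ∑ i, ∑ j, ((-Γ i j) * ((φ (y i) - φ (y j)) * (y i - y j))
            + Γ i j * (φ (y i) * y i + φ (y j) * y j)) := by
          rw [← Finset.sum_add_distrib]
          refine Finset.sum_congr rfl fun i _ => ?_
          rw [← Finset.sum_add_distrib]
          exact Finset.sum_congr rfl fun j _ => by ring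
      _ = ∑ i, ((∑ j, (-Γ i j) * ((φ (y i) - φ (y j)) * (y i - y j)))
            + ∑ j, Γ i j * (φ (y i) * y i + φ (y j) * y j)) :=
          Finset.sum_congr rfl fun i _ => Finset.sum_add_distrib
      _ = _ := Finset.sum_add_distrib
  have hT : 0 ≤ ∑ i, ∑ j, (-Γ i j) * ((φ (y i) - φ (y j)) * (y i - y j)) := by
    refine Finset.sum_nonneg fun i _ => Finset.sum_nonneg fun j _ => ?_
    by_cases h : i = j
    · subst h; simp
    · exact mul_nonneg (neg_nonneg.2 (hoff i j h)) (hcross i j)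
  have hR : 0 ≤ ∑ i, ∑ j, Γ i j * (φ (y i) * y i + φ (y j) * y j) := by
    have e1 : ∑ i, ∑ j, Γ i j * (φ (y i) * y i + φ (y j) * y j)
        = ∑ i, ∑ j, Γ i j * (φ (y i) * y i) + ∑ i, ∑ j, Γ i j * (φ (y j) * y j) := by
      rw [← Finset.sum_add_distrib]
      refine Finset.sum_congr rfl fun i _ => ?_
      rw [← Finset.sum_add_distrib]
      exact Finset.sum_congr rfl fun j _ => by ring
    have e2 : ∑ i, ∑ j, Γ i j * (φ (y j) * y j) = ∑ i, ∑ j, Γ i j * (φ (y i) * y i) := by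
      rw [Finset.sum_comm]
      exact Finset.sum_congr rfl fun j _ => Finset.sum_congr rfl fun i _ => by rw [hsym j i]
    rw [e1, e2]
    have : 0 ≤ ∑ i, ∑ j, Γ i j * (φ (y i) * y i) := by
      refine Finset.sum_nonneg fun i _ => ?_
      have : ∑ j, Γ i j * (φ (y i) * y i) = (∑ j, Γ i j) * (φ (y i) * y i) := by
        rw [Finset.sum_mul]
      rw [this]
      exact mul_nonneg (hrow i) (hφy i)
    linarith
  linarith
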